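/- Let L be a first-order language, κ an infinite cardinal, M a κ-compact L-structure, and (I, ≤) a directed partial order of cardinality less than κ. Let (X i, v j i) be an ∅-definable inverse system over I and (f i : Y → X i) a compatible family of ∅-definable maps from an ∅-definable set Y ⊆ (Fin m → M). Assume the induced map from Y to the inverse limit of points is injective, i.e. for all y, y' ∈ Y, if f i y = f i y' for every i ∈ I then y = y'. Then there exists k ∈ I such that f k : Y → X k is injective. -/
import Mathlib


open FirstOrder Cardinal

/-- An `L`-structure `M` is `κ`-compact if every set of fewer than `κ` formulas (in any
variable index type) that is finitely realized in `M` is realized in `M`. -/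
def KappaCompact (L : FirstOrder.Language.{0, 0}) (κ : Cardinal.{0}) (M : Type)
    [L.Structure M] : Prop :=
  ∀ (α : Type) (Φ : Set (L.Formula α)), #Φ < κ →
    (∀ Φ₀ : Set (L.Formula α), Φ₀ ⊆ Φ → Φ₀.Finite →
      ∃ v : α → M, ∀ φ ∈ Φ₀, φ.Realize v) →
    ∃ v : α → M, ∀ φ ∈ Φ, φ.Realize v

/-- A function `g` from a subset `X` of `Fin n → M` to `Fin m → M` is ∅-definable if its
graph is a ∅-definable subset of `(Fin n ⊕ Fin m) → M`. -/
def DefinableFun (L : FirstOrder.Language.{0, 0}) (M : Type) [L.Structure M]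
    {n m : ℕ} (X : Set (Fin n → M)) (g : (Fin n → M) → (Fin m → M)) : Prop :=
  Set.Definable (∅ : Set M) L
    {z : Fin n ⊕ Fin m → M | z ∘ Sum.inl ∈ X ∧ g (z ∘ Sum.inl) = z ∘ Sum.inr}

/-- A ∅-definable inverse (cofiltered) system of ∅-definable sets and ∅-definable maps,
indexed by a partial order `I`: for `i ≤ j`, `v i j : X j → X i`. -/
structure DefInverseSystem (L : FirstOrder.Language.{0, 0}) (M : Type) [L.Structure M]
    (I : Type) [PartialOrder I] where
  n : I → ℕ
  X : ∀ i, Set (Fin (n i) → M)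
  X_def : ∀ i, Set.Definable (∅ : Set M) L (X i)
  v : ∀ i j, i ≤ j → (Fin (n j) → M) → (Fin (n i) → M)
  v_mem : ∀ i j (h : i ≤ j), ∀ x ∈ X j, v i j h x ∈ X i
  v_def : ∀ i j (h : i ≤ j), DefinableFun L M (X j) (v i j h)
  v_id : ∀ i, ∀ x ∈ X i, v i i le_rfl x = x
  v_comp : ∀ i j k (hij : i ≤ j) (hjk : j ≤ k), ∀ x ∈ X k,
    v i j hij (v j k hjk x) = v i k (hij.trans hjk) x

theorem pro_injective_on_limit_stabilizes
    (L : FirstOrder.Language.{0, 0}) (κ : Cardinal.{0}) (M : Type) [L.Structure M]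
    (hκ : ℵ₀ ≤ κ) (hM : KappaCompact L κ M)
    (I : Type) [PartialOrder I] [IsDirected I (· ≤ ·)] [Nonempty I] (hI : #I < κ)
    (S : DefInverseSystem L M I)
    {m : ℕ} (Y : Set (Fin m → M)) (hY : Set.Definable (∅ : Set M) L Y)
    (f : ∀ i, (Fin m → M) → (Fin (S.n i) → M))
    (f_mem : ∀ i, ∀ y ∈ Y, f i y ∈ S.X i)
    (f_def : ∀ i, DefinableFun L M Y (f i))
    (f_compat : ∀ i j (h : i ≤ j), ∀ y ∈ Y, S.v i j h (f j y) = f i y)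
    (hinj : ∀ y ∈ Y, ∀ y' ∈ Y, (∀ i, f i y = f i y') → y = y') :
    ∃ k, ∀ y ∈ Y, ∀ y' ∈ Y, f k y = f k y' → y = y' := by
  classical
  by_contra hcon
  push_neg at hcon
  -- the "bad" sets
  set A : I → Set (Fin m ⊕ Fin m → M) := fun i =>
    {z | (z ∘ Sum.inl ∈ Y ∧ z ∘ Sum.inr ∈ Y ∧ f i (z ∘ Sum.inl) = f i (z ∘ Sum.inr)) ∧
      z ∘ Sum.inl ≠ z ∘ Sum.inr} with hA
  -- definability of each A i
  have hSdef : ∀ i, Set.Definable (∅ : Set M) L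
      {z : Fin m ⊕ Fin m → M | z ∘ Sum.inl ∈ Y ∧ z ∘ Sum.inr ∈ Y ∧
        f i (z ∘ Sum.inl) = f i (z ∘ Sum.inr)} := by
    intro i
    have hG := f_def i
    have h1 := hG.preimage_comp
      (Sum.map Sum.inl (id : Fin (S.n i) → Fin (S.n i)) :
        Fin m ⊕ Fin (S.n i) → (Fin m ⊕ Fin m) ⊕ Fin (S.n i))
    have h2 := hG.preimage_comp
      (Sum.map Sum.inr (id : Fin (S.n i) → Fin (S.n i)) :
        Fin m ⊕ Fin (S.n i) → (Fin m ⊕ Fin m) ⊕ Fin (S.n i))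
    have h3 := (h1.inter h2).image_comp
      (Sum.inl : (Fin m ⊕ Fin m) → ((Fin m ⊕ Fin m) ⊕ Fin (S.n i)))
    convert h3 using 1
    ext w
    simp only [Set.mem_setOf_eq, Set.mem_image, Set.mem_inter_iff, Set.mem_preimage]
    constructor
    · rintro ⟨h1, h2, h3⟩
      refine ⟨Sum.elim w (f i (w ∘ Sum.inl)), ⟨⟨?_, ?_⟩, ⟨?_, ?_⟩⟩, ?_⟩
      · exact h1
      · rfl
      · exact h2
      · exact h3.symm
      · exact (Sum.elim_comp_inl _ _)
    · rintro ⟨z, ⟨⟨hz1, hz2⟩, ⟨hz3, hz4⟩⟩, rfl⟩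
      exact ⟨hz1, hz3, hz2.trans hz4.symm⟩
  have hNdef : Set.Definable (∅ : Set M) L
      {z : Fin m ⊕ Fin m → M | z ∘ Sum.inl ≠ z ∘ Sum.inr} := by
    have hD : Set.Definable (∅ : Set M) L
        {z : Fin m ⊕ Fin m → M | z ∘ Sum.inl = z ∘ Sum.inr} := by
      have h := (Set.definable_univ (L := L) (A := (∅ : Set M)) (α := Fin m) (M := M)).image_comp
        (Sum.elim id id : Fin m ⊕ Fin m → Fin m)
      convert h using 1
      ext z
      simp only [Set.mem_setOf_eq, Set.mem_image, Set.mem_univ, true_and]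
      constructor
      · intro hz
        refine ⟨z ∘ Sum.inl, ?_⟩
        funext a
        cases a with
        | inl a => rfl
        | inr a => exact congrFun hz a
      · rintro ⟨g, rfl⟩
        rfl
    exact hD.compl
  have hAdef : ∀ i, Set.Definable (∅ : Set M) L (A i) := fun i =>
    (hSdef i).inter hNdef
  choose φ hφ using fun i => Set.empty_definable_iff.mp (hAdef i)
  set Φ : Set (L.Formula (Fin m ⊕ Fin m)) := Set.range φ with hΦ
  have hcard : #Φ < κ := lt_of_le_of_lt Cardinal.mk_range_le hI
  have hfinsat : ∀ Φ₀ : Set (L.Formula (Fin m ⊕ Fin m)), Φ₀ ⊆ Φ → Φ₀.Finite →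
      ∃ v : Fin m ⊕ Fin m → M, ∀ ψ ∈ Φ₀, ψ.Realize v := by
    intro Φ₀ hsub hfin
    have hg : ∀ ψ : L.Formula (Fin m ⊕ Fin m), ∃ i : I, ψ ∈ Φ₀ → φ i = ψ := by
      intro ψ
      by_cases hψ : ψ ∈ Φ₀
      · obtain ⟨i, hi⟩ := hsub hψ
        exact ⟨i, fun _ => hi⟩
      · exact ⟨Classical.arbitrary I, fun h => absurd h hψ⟩
    choose g hgspec using hg
    obtain ⟨k, hk⟩ := Finset.exists_le (hfin.toFinset.image g)
    obtain ⟨y, hy, y', hy', hfk, hne⟩ := hcon k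
    refine ⟨Sum.elim y y', fun ψ hψ => ?_⟩
    have hgk : g ψ ≤ k := hk _ (Finset.mem_image_of_mem g (hfin.mem_toFinset.mpr hψ))
    have hmem : Sum.elim y y' ∈ A (g ψ) := by
      refine ⟨⟨?_, ?_, ?_⟩, ?_⟩
      · simpa using hy
      · simpa using hy'
      · have h1 := f_compat (g ψ) k hgk y hy
        have h2 := f_compat (g ψ) k hgk y' hy'
        simp only [Sum.elim_comp_inl, Sum.elim_comp_inr]
        rw [← h1, ← h2, hfk]
      · simpa using hne
    rw [← hgspec ψ hψ]
    have := hφ (g ψ) ▸ hmem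
    exact this
  obtain ⟨v, hv⟩ := hM _ Φ hcard hfinsat
  have hvA : ∀ i, v ∈ A i := by
    intro i
    have : (φ i).Realize v := hv _ ⟨i, rfl⟩
    rw [hφ i]
    exact this
  obtain ⟨i₀⟩ := ‹Nonempty I›
  obtain ⟨⟨hy, hy', _⟩, hne⟩ := hvA i₀
  exact hne (hinj _ hy _ hy' (fun i => (hvA i).1.2.2))
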